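/- Let H be a complex Hilbert space and let R = (R_1,…,R_d) be a commuting d-tuple of bounded linear operators on H, and let m ≥ 2, n ≥ 2 be integers such that Λ_{m−1,n−1}(R) ≠ 0. If R is an m-isometric multioperator (M_m(R) = 0), then the operators Λ_{0,n−1}(R), Λ_{1,n−1}(R), …, Λ_{m−1,n−1}(R) are linearly independent: whenever a_0,…,a_{m−1} ∈ ℂ satisfy Σ_{k=0}^{m−1} a_k Λ_{k,n−1}(R) = 0, then a_0 = a_1 = ⋯ = a_{m−1} = 0. -/

import Mathlib

open Finset ContinuousLinearMap
open scoped InnerProductSpace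

variable {H : Type*} [NormedAddCommGroup H] [InnerProductSpace ℂ H] [CompleteSpace H]

/-- `R^γ = R_1^{γ_1} ⋯ R_d^{γ_d}` for a multi-index `γ`. -/
noncomputable def opPow {d : ℕ} (R : Fin d → H →L[ℂ] H) (γ : Fin d → ℕ) : H →L[ℂ] H :=
  (List.ofFn fun i => (R i) ^ (γ i)).prod

/-- `M_m(R) = Σ_{k=0}^{m} (−1)^{m−k} C(m,k) Σ_{|γ|=k} (k!/γ!) R*^γ R^γ`. -/
noncomputable def Mop {d : ℕ} (R : Fin d → H →L[ℂ] H) (m : ℕ) : H →L[ℂ] H :=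
  ∑ k ∈ Finset.range (m + 1), ((-1 : ℂ) ^ (m - k) * (m.choose k : ℂ)) •
    ∑ γ ∈ Finset.Nat.antidiagonalTuple d k,
      ((Nat.multinomial Finset.univ γ : ℕ) : ℂ) •
        (opPow (fun i => ContinuousLinearMap.adjoint (R i)) γ * opPow R γ)

/-- `S_n(R) = Σ_{k=0}^{n} (−1)^{n−k} C(n,k) (R_1*+⋯+R_d*)^k (R_1+⋯+R_d)^{n−k}`. -/
noncomputable def Sop {d : ℕ} (R : Fin d → H →L[ℂ] H) (n : ℕ) : H →L[ℂ] H :=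
  ∑ k ∈ Finset.range (n + 1), ((-1 : ℂ) ^ (n - k) * (n.choose k : ℂ)) •
    ((∑ i, ContinuousLinearMap.adjoint (R i)) ^ k * (∑ i, R i) ^ (n - k))

/-- `Λ_{m,n}(R) = Σ_{k=0}^{n} (−1)^{n−k} C(n,k) (R_1*+⋯+R_d*)^k M_m(R) (R_1+⋯+R_d)^{n−k}`. -/
noncomputable def Lam {d : ℕ} (R : Fin d → H →L[ℂ] H) (m n : ℕ) : H →L[ℂ] H :=
  ∑ k ∈ Finset.range (n + 1), ((-1 : ℂ) ^ (n - k) * (n.choose k : ℂ)) •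
    ((∑ i, ContinuousLinearMap.adjoint (R i)) ^ k * Mop R m * (∑ i, R i) ^ (n - k))

set_option linter.unusedSectionVars false
open Nat

section gen

variable {M : Type*} [Monoid M]

theorem commute_listProd {d : ℕ} {T : Fin d → M} {x : M} (h : ∀ j, Commute x (T j))
    (γ : Fin d → ℕ) : Commute x (List.ofFn fun i => (T i) ^ (γ i)).prod := by
  apply Commute.list_prod_right
  intro y hy
  obtain ⟨j, hj⟩ := List.mem_ofFn.mp hy
  exact hj ▸ (h j).pow_right _
end gen

theorem commute_opPow {d : ℕ} {T : Fin d → H →L[ℂ] H} {x : H →L[ℂ] H}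
    (h : ∀ j, Commute x (T j)) (γ : Fin d → ℕ) : Commute x (opPow T γ) :=
  commute_listProd h γ

theorem opPow_succ {d : ℕ} (T : Fin d → H →L[ℂ] H) (hT : ∀ i j, Commute (T i) (T j))
    (γ : Fin d → ℕ) (i : Fin d) :
    opPow T (Function.update γ i (γ i + 1)) = T i * opPow T γ := by
  induction d with
  | zero => exact i.elim0
  | succ d ih =>
    rw [opPow, opPow, List.ofFn_succ, List.ofFn_succ, List.prod_cons, List.prod_cons]
    rcases Fin.eq_zero_or_eq_succ i with h0 | ⟨i', rfl⟩
    · subst h0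
      have htail : ∀ j : Fin d, (Function.update γ 0 (γ 0 + 1)) j.succ = γ j.succ := by
        intro j; exact Function.update_of_ne (Fin.succ_ne_zero j) _ _
      simp only [Function.update_self, htail, _root_.pow_succ']
      rw [mul_assoc]
    · have h0 : (Function.update γ i'.succ (γ i'.succ + 1)) 0 = γ 0 :=
        Function.update_of_ne (Fin.succ_ne_zero i').symm _ _
      have htail : (fun j : Fin d => (Function.update γ i'.succ (γ i'.succ + 1)) j.succ)
          = Function.update (fun j : Fin d => γ j.succ) i' ((fun j : Fin d => γ j.succ) i' + 1) := by
        funext j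
        rcases eq_or_ne j i' with rfl | hne
        · simp
        · rw [Function.update_of_ne (fun hh => hne (Fin.succ_injective _ hh)),
            Function.update_of_ne hne]
      have ihe := ih (fun j => T j.succ) (fun a b => hT _ _) (fun j => γ j.succ) i'
      rw [h0]
      rw [show (List.ofFn fun j : Fin d => T j.succ ^ (Function.update γ i'.succ (γ i'.succ + 1)) j.succ).prod
          = opPow (fun j : Fin d => T j.succ) (Function.update (fun j : Fin d => γ j.succ) i' ((fun j : Fin d => γ j.succ) i' + 1)) by
        rw [opPow]; congr 1; exact congrArg _ (by funext j; rw [congrFun htail j])]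
      rw [ihe, ← mul_assoc, ← mul_assoc]
      congr 1
      exact ((hT i'.succ 0).pow_right _).symm

theorem opPow_succ' {d : ℕ} (T : Fin d → H →L[ℂ] H) (hT : ∀ i j, Commute (T i) (T j))
    (γ : Fin d → ℕ) (i : Fin d) :
    opPow T (Function.update γ i (γ i + 1)) = opPow T γ * T i := by
  rw [opPow_succ T hT γ i]
  exact (commute_opPow (fun j => hT i j) γ).eq

noncomputable def Qop {d : ℕ} (R : Fin d → H →L[ℂ] H) (k : ℕ) : H →L[ℂ] H :=
  ∑ γ ∈ Finset.Nat.antidiagonalTuple d k,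
    ((Nat.multinomial Finset.univ γ : ℕ) : ℂ) •
      (opPow (fun i => ContinuousLinearMap.adjoint (R i)) γ * opPow R γ)

noncomputable def Eop {d : ℕ} (R : Fin d → H →L[ℂ] H) :
    (H →L[ℂ] H) →ₗ[ℂ] (H →L[ℂ] H) where
  toFun T := ∑ i, ContinuousLinearMap.adjoint (R i) * T * R i
  map_add' x y := by simp [mul_add, add_mul, Finset.sum_add_distrib]
  map_smul' c x := by simp [Finset.smul_sum, smul_mul_assoc, mul_smul_comm]

theorem adj_comm {d : ℕ} {R : Fin d → H →L[ℂ] H} (hcomm : ∀ i j, Commute (R i) (R j))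
    (i j : Fin d) :
    Commute (ContinuousLinearMap.adjoint (R i)) (ContinuousLinearMap.adjoint (R j)) := by
  have h := congrArg ContinuousLinearMap.adjoint (hcomm j i).eq
  rwa [ContinuousLinearMap.mul_def, ContinuousLinearMap.mul_def, adjoint_comp, adjoint_comp] at h

theorem mem_adt {d k : ℕ} {γ : Fin d → ℕ} :
    γ ∈ Finset.Nat.antidiagonalTuple d k ↔ ∑ i, γ i = k :=
  Finset.Nat.mem_antidiagonalTuple

theorem sum_update_split {d : ℕ} (γ : Fin d → ℕ) (i : Fin d) (b : ℕ) :
    ∑ j, Function.update γ i b j = b + ∑ j ∈ univ.erase i, γ j := by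
  rw [Finset.sum_update_of_mem (mem_univ i), Finset.sdiff_singleton_eq_erase]

theorem sum_split {d : ℕ} (γ : Fin d → ℕ) (i : Fin d) :
    ∑ j, γ j = γ i + ∑ j ∈ univ.erase i, γ j := by
  rw [Finset.add_sum_erase _ _ (mem_univ i)]


theorem mult_update (d k : ℕ) (δ : Fin d → ℕ) (i : Fin d) (hi : 0 < δ i)
    (hs : ∑ j, δ j = k + 1) :
    Nat.multinomial univ (Function.update δ i (δ i - 1)) * (k + 1)
      = Nat.multinomial univ δ * δ i := by
  set δ' := Function.update δ i (δ i - 1) with hδ'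
  have hsd : (univ : Finset (Fin d)) \ {i} = univ.erase i := Finset.sdiff_singleton_eq_erase i univ
  have hs2 : ∑ x ∈ univ.erase i, δ x + δ i = k + 1 := by
    rw [Finset.sum_erase_add _ _ (mem_univ i)]; exact hs
  have hs' : ∑ j, δ' j = k := by
    rw [hδ', Finset.sum_update_of_mem (mem_univ i), hsd]
    omega
  have spec := Nat.multinomial_spec univ δ
  have spec' := Nat.multinomial_spec univ δ'
  rw [hs] at spec; rw [hs'] at spec'
  have hprod : ∏ j, (δ j)! = δ i * ∏ j, (δ' j)! := by
    rw [← Finset.prod_erase_mul _ _ (mem_univ i), ← Finset.prod_erase_mul _ (fun j => (δ' j)!) (mem_univ i)]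
    have h1 : ∀ j ∈ univ.erase i, (δ j)! = (δ' j)! := by
      intro j hj
      rw [hδ', Function.update_of_ne (Finset.ne_of_mem_erase hj)]
    rw [Finset.prod_congr rfl h1, hδ', Function.update_self]
    have h2 : (δ i)! = δ i * (δ i - 1)! := by
      obtain ⟨t, ht⟩ := Nat.exists_eq_succ_of_ne_zero hi.ne'
      rw [ht]; simp [Nat.factorial_succ]
    rw [h2]; ring
  have hP : 0 < ∏ j, (δ' j)! := Finset.prod_pos fun j _ => Nat.factorial_pos _
  apply Nat.eq_of_mul_eq_mul_left hP
  calc (∏ j, (δ' j)!) * (Nat.multinomial univ δ' * (k + 1))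
      = ((∏ j, (δ' j)!) * Nat.multinomial univ δ') * (k+1) := by ring
    _ = (k+1)! := by rw [spec', Nat.factorial_succ]; ring
    _ = (∏ j, (δ j)!) * Nat.multinomial univ δ := spec.symm
    _ = (∏ j, (δ' j)!) * (Nat.multinomial univ δ * δ i) := by rw [hprod]; ring

theorem mult_sum (d k : ℕ) (δ : Fin d → ℕ) (hs : ∑ j, δ j = k + 1) :
    ∑ i ∈ univ.filter (fun i => 0 < δ i),
        Nat.multinomial univ (Function.update δ i (δ i - 1))
      = Nat.multinomial univ δ := by
  apply Nat.eq_of_mul_eq_mul_right (Nat.succ_pos k)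
  rw [Finset.sum_mul]
  rw [Finset.sum_congr rfl fun i hi => mult_update d k δ i (Finset.mem_filter.mp hi).2 hs]
  rw [← Finset.mul_sum]
  have h3 : ∑ i ∈ univ.filter (fun i => 0 < δ i), δ i = ∑ i, δ i :=
    Finset.sum_filter_of_ne (fun i _ h => Nat.pos_of_ne_zero h)
  rw [h3, hs]

theorem Eop_Q {d : ℕ} (R : Fin d → H →L[ℂ] H) (hcomm : ∀ i j, Commute (R i) (R j)) (k : ℕ) :
    Eop R (Qop R k) = Qop R (k + 1) := by
  classical
  set A : Fin d → H →L[ℂ] H := fun i => ContinuousLinearMap.adjoint (R i) with hA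
  have hAc : ∀ i j, Commute (A i) (A j) := fun i j => adj_comm hcomm i j
  set f : (Fin d → ℕ) → H →L[ℂ] H := fun δ => opPow A δ * opPow R δ with hf
  set c : (Fin d → ℕ) → ℂ := fun δ => ((Nat.multinomial Finset.univ δ : ℕ) : ℂ) with hc
  have key : ∀ (γ : Fin d → ℕ) (i : Fin d),
      A i * (opPow A γ * opPow R γ) * R i = f (Function.update γ i (γ i + 1)) := by
    intro γ i
    rw [hf]
    simp only
    rw [opPow_succ A hAc, opPow_succ' R hcomm]
    simp only [mul_assoc]
  have step1 : Eop R (Qop R k)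
      = ∑ p ∈ (univ : Finset (Fin d)) ×ˢ (Finset.Nat.antidiagonalTuple d k),
          c p.2 • f (Function.update p.2 p.1 (p.2 p.1 + 1)) := by
    rw [Finset.sum_product]
    show (∑ i, A i * Qop R k * R i) = _
    refine Finset.sum_congr rfl fun i _ => ?_
    rw [Qop, Finset.mul_sum, Finset.sum_mul]
    refine Finset.sum_congr rfl fun γ _ => ?_
    rw [mul_smul_comm, smul_mul_assoc, key γ i]
  rw [step1]
  have step2 : ∑ p ∈ (univ : Finset (Fin d)) ×ˢ (Finset.Nat.antidiagonalTuple d k),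
          c p.2 • f (Function.update p.2 p.1 (p.2 p.1 + 1))
      = ∑ q ∈ ((Finset.Nat.antidiagonalTuple d (k+1)) ×ˢ (univ : Finset (Fin d))).filter
          (fun q => 0 < q.1 q.2),
          c (Function.update q.1 q.2 (q.1 q.2 - 1)) • f q.1 := by
    refine Finset.sum_nbij' (fun p => (Function.update p.2 p.1 (p.2 p.1 + 1), p.1))
      (fun q => (q.2, Function.update q.1 q.2 (q.1 q.2 - 1))) ?_ ?_ ?_ ?_ ?_
    · rintro ⟨i, γ⟩ hp
      simp only [Finset.mem_product, Finset.mem_filter] at hp ⊢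
      have hγ : ∑ j, γ j = k := mem_adt.mp hp.2
      refine ⟨⟨mem_adt.mpr ?_, mem_univ i⟩, ?_⟩
      · rw [sum_update_split]
        rw [sum_split γ i] at hγ
        omega
      · simp
    · rintro ⟨δ, i⟩ hq
      simp only [Finset.mem_filter, Finset.mem_product] at hq
      have hδ : ∑ j, δ j = k + 1 := mem_adt.mp hq.1.1
      simp only [Finset.mem_product]
      refine ⟨mem_univ i, mem_adt.mpr ?_⟩
      rw [sum_update_split]
      rw [sum_split δ i] at hδ
      have := hq.2
      omega
    · rintro ⟨i, γ⟩ hp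
      simp only [Prod.mk.injEq]
      refine ⟨trivial, ?_⟩
      funext j
      rcases eq_or_ne j i with rfl | hne
      · simp
      · rw [Function.update_of_ne hne, Function.update_of_ne hne]
    · rintro ⟨δ, i⟩ hq
      simp only [Finset.mem_filter] at hq
      have hpos := hq.2
      simp only [Prod.mk.injEq]
      refine ⟨?_, trivial⟩
      funext j
      rcases eq_or_ne j i with rfl | hne
      · simp only [Function.update_self]
        omega
      · rw [Function.update_of_ne hne, Function.update_of_ne hne]
    · rintro ⟨i, γ⟩ hp
      simp only
      congr 1
      rw [hc]
      simp only
      congr 2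
      funext j
      rcases eq_or_ne j i with rfl | hne
      · simp
      · rw [Function.update_of_ne hne, Function.update_of_ne hne]
  rw [step2]
  have step3 : ∑ q ∈ ((Finset.Nat.antidiagonalTuple d (k+1)) ×ˢ (univ : Finset (Fin d))).filter
          (fun q => 0 < q.1 q.2),
          c (Function.update q.1 q.2 (q.1 q.2 - 1)) • f q.1
      = ∑ δ ∈ Finset.Nat.antidiagonalTuple d (k+1),
          (∑ i ∈ univ.filter (fun i => 0 < δ i),
            c (Function.update δ i (δ i - 1))) • f δ := by
    rw [Finset.sum_filter, Finset.sum_product]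
    refine Finset.sum_congr rfl fun δ _ => ?_
    rw [Finset.sum_filter, Finset.sum_smul]
    refine Finset.sum_congr rfl fun i _ => ?_
    split <;> simp
  rw [step3, Qop]
  refine Finset.sum_congr rfl fun δ hδ => ?_
  congr 1
  rw [hc]
  simp only
  rw [← Nat.cast_sum]
  norm_cast
  exact mult_sum d k δ (mem_adt.mp hδ)

theorem Mop_eq_Q {d : ℕ} (R : Fin d → H →L[ℂ] H) (m : ℕ) :
    Mop R m = ∑ k ∈ Finset.range (m + 1),
      ((-1 : ℂ) ^ (m - k) * (m.choose k : ℂ)) • Qop R k := rfl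

theorem Mop_succ {d : ℕ} (R : Fin d → H →L[ℂ] H) (hcomm : ∀ i j, Commute (R i) (R j))
    (m : ℕ) : Mop R (m + 1) = Eop R (Mop R m) - Mop R m := by
  rw [Mop_eq_Q R (m+1), Mop_eq_Q R m, map_sum]
  simp only [map_smul, Eop_Q R hcomm]
  rw [Finset.sum_range_succ'
    (fun k => ((-1:ℂ)^(m+1-k) * ((m+1).choose k : ℂ)) • Qop R k) (m+1)]
  have e1 : ∀ k ∈ Finset.range (m+1),
      ((-1:ℂ)^(m+1-(k+1)) * (((m+1).choose (k+1) : ℕ) : ℂ)) • Qop R (k+1)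
      = ((-1:ℂ)^(m-k) * ((m.choose k : ℕ) : ℂ)) • Qop R (k+1)
        + ((-1:ℂ)^(m-k) * ((m.choose (k+1) : ℕ) : ℂ)) • Qop R (k+1) := by
    intro k hk
    rw [← add_smul]
    congr 1
    have h2 : m + 1 - (k+1) = m - k := by omega
    rw [h2, Nat.choose_succ_succ]
    push_cast
    ring
  rw [Finset.sum_congr rfl e1, Finset.sum_add_distrib]
  have e2 : (∑ k ∈ Finset.range (m+1),
        ((-1:ℂ)^(m-k) * ((m.choose (k+1) : ℕ):ℂ)) • Qop R (k+1))
      + ((-1:ℂ)^(m+1-0) * (((m+1).choose 0 : ℕ) : ℂ)) • Qop R 0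
      = - ∑ k ∈ Finset.range (m+1),
          ((-1:ℂ)^(m-k) * ((m.choose k : ℕ):ℂ)) • Qop R k := by
    rw [Finset.sum_range_succ
      (fun k => ((-1:ℂ)^(m-k) * ((m.choose (k+1) : ℕ):ℂ)) • Qop R (k+1)) m]
    rw [Finset.sum_range_succ'
      (fun k => ((-1:ℂ)^(m-k) * ((m.choose k : ℕ):ℂ)) • Qop R k) m]
    simp only [Nat.choose_succ_self, Nat.cast_zero, mul_zero, zero_smul, add_zero]
    rw [neg_add]
    congr 1
    · rw [← Finset.sum_neg_distrib]
      refine Finset.sum_congr rfl fun k hk => ?_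
      rw [← neg_smul]
      congr 1
      have hk' : k < m := Finset.mem_range.mp hk
      have h3 : m - k = (m - (k+1)) + 1 := by omega
      rw [h3, pow_succ]
      ring
    · rw [← neg_smul]
      congr 1
      simp only [Nat.choose_zero_right, Nat.cast_one, mul_one, Nat.sub_zero, pow_succ]
      ring
  rw [add_assoc, e2, sub_eq_add_neg]

theorem Lam_eq {d : ℕ} (R : Fin d → H →L[ℂ] H) (m n : ℕ) :
    Lam R m n = ∑ k ∈ Finset.range (n + 1), ((-1 : ℂ) ^ (n - k) * (n.choose k : ℂ)) •
      ((∑ i, ContinuousLinearMap.adjoint (R i)) ^ k * Mop R m * (∑ i, R i) ^ (n - k)) := rfl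

theorem Eop_conj {d : ℕ} (R : Fin d → H →L[ℂ] H) (hcomm : ∀ i j, Commute (R i) (R j))
    (M : H →L[ℂ] H) (j l : ℕ) :
    Eop R ((∑ i, ContinuousLinearMap.adjoint (R i)) ^ j * M * (∑ i, R i) ^ l)
      = (∑ i, ContinuousLinearMap.adjoint (R i)) ^ j * Eop R M * (∑ i, R i) ^ l := by
  set Sa : H →L[ℂ] H := ∑ i, ContinuousLinearMap.adjoint (R i) with hSa
  set Sb : H →L[ℂ] H := ∑ i, R i with hSb
  show (∑ i, ContinuousLinearMap.adjoint (R i) * (Sa ^ j * M * Sb ^ l) * R i)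
      = Sa ^ j * (∑ i, ContinuousLinearMap.adjoint (R i) * M * R i) * Sb ^ l
  rw [Finset.mul_sum, Finset.sum_mul]
  refine Finset.sum_congr rfl fun i _ => ?_
  have h1 : ContinuousLinearMap.adjoint (R i) * Sa ^ j
      = Sa ^ j * ContinuousLinearMap.adjoint (R i) :=
    ((Commute.sum_right _ _ _ fun t _ => adj_comm hcomm i t).pow_right j).eq
  have h2 : Sb ^ l * R i = R i * Sb ^ l :=
    ((Commute.sum_right _ _ _ fun t _ => hcomm i t).pow_right l).eq.symm
  calc ContinuousLinearMap.adjoint (R i) * (Sa ^ j * M * Sb ^ l) * R i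
      = (ContinuousLinearMap.adjoint (R i) * Sa ^ j) * (M * (Sb ^ l * R i)) := by
        simp only [mul_assoc]
    _ = (Sa ^ j * ContinuousLinearMap.adjoint (R i)) * (M * (R i * Sb ^ l)) := by
        rw [h1, h2]
    _ = Sa ^ j * (ContinuousLinearMap.adjoint (R i) * M * R i) * Sb ^ l := by
        simp only [mul_assoc]

theorem Lam_succ {d : ℕ} (R : Fin d → H →L[ℂ] H) (hcomm : ∀ i j, Commute (R i) (R j))
    (k n : ℕ) : Lam R (k + 1) n = Eop R (Lam R k n) - Lam R k n := by
  rw [Lam_eq R (k+1) n, Lam_eq R k n, map_sum]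
  simp only [map_smul, Eop_conj R hcomm]
  rw [← Finset.sum_sub_distrib]
  refine Finset.sum_congr rfl fun j _ => ?_
  rw [← smul_sub]
  congr 1
  rw [Mop_succ R hcomm k, mul_sub, sub_mul]

noncomputable def Phi {d : ℕ} (R : Fin d → H →L[ℂ] H) : Module.End ℂ (H →L[ℂ] H) :=
  Eop R - LinearMap.id

theorem Phi_Lam {d : ℕ} (R : Fin d → H →L[ℂ] H) (hcomm : ∀ i j, Commute (R i) (R j))
    (k n : ℕ) : Phi R (Lam R k n) = Lam R (k + 1) n := by
  rw [Phi, LinearMap.sub_apply, LinearMap.id_apply, Lam_succ R hcomm]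

theorem Phi_iter {d : ℕ} (R : Fin d → H →L[ℂ] H) (hcomm : ∀ i j, Commute (R i) (R j))
    (p k n : ℕ) : (Phi R ^ p) (Lam R k n) = Lam R (k + p) n := by
  induction p generalizing k with
  | zero => simp
  | succ p ih =>
    rw [pow_succ, Module.End.mul_apply, Phi_Lam R hcomm, ih]
    congr 1
    omega

theorem Mop_ge {d : ℕ} (R : Fin d → H →L[ℂ] H) (hcomm : ∀ i j, Commute (R i) (R j))
    {m : ℕ} (hiso : Mop R m = 0) (p : ℕ) : Mop R (m + p) = 0 := by
  induction p with
  | zero => exact hiso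
  | succ p ih => rw [show m + (p+1) = (m + p) + 1 by omega, Mop_succ R hcomm, ih, map_zero,
      sub_zero]

theorem Lam_zero {d : ℕ} (R : Fin d → H →L[ℂ] H) {j : ℕ} (h : Mop R j = 0) (n : ℕ) :
    Lam R j n = 0 := by
  rw [Lam_eq]
  simp [h]

/-- if `R` is a strict `m`-isometric multioperator (with
`Λ_{m−1,n−1}(R) ≠ 0`), then `Λ_{0,n−1}(R), …, Λ_{m−1,n−1}(R)` are linearly independent. -/
theorem lam_linear_independent_isometric {d : ℕ} (R : Fin d → H →L[ℂ] H)
    (hcomm : ∀ i j, Commute (R i) (R j)) (m n : ℕ) (hm : 2 ≤ m) (hn : 2 ≤ n)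
    (hne : Lam R (m - 1) (n - 1) ≠ 0) (hiso : Mop R m = 0)
    (a : ℕ → ℂ) (ha : ∑ k ∈ Finset.range m, a k • Lam R k (n - 1) = 0) :
    ∀ k < m, a k = 0 := by
  intro k
  induction k using Nat.strong_induction_on with
  | _ k IH =>
    intro hk
    have hfa := congrArg (fun T => (Phi R ^ (m - 1 - k)) T) ha
    simp only [map_sum, map_smul, map_zero, Phi_iter R hcomm] at hfa
    rw [Finset.sum_eq_single k] at hfa
    · rw [show k + (m - 1 - k) = m - 1 by omega] at hfa
      rcases smul_eq_zero.mp hfa with h | h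
      · exact h
      · exact absurd h hne
    · intro j hj hjk
      rcases lt_or_gt_of_ne hjk with hlt | hgt
      · rw [IH j hlt (Finset.mem_range.mp hj), zero_smul]
      · obtain ⟨p, hp⟩ : ∃ p, j + (m - 1 - k) = m + p := ⟨j - k - 1, by omega⟩
        rw [hp, Lam_zero R (Mop_ge R hcomm hiso p), smul_zero]
    · intro h
      exact absurd (Finset.mem_range.mpr hk) h
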